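/- Let α : ℤ → ℝ be a finitely supported mask and γ : ℤ → ℝ be absolutely summable. Then the even reversibility property holds, namely ((I − S_α D_γ) c)_{2j} = 0 for every bounded sequence c : ℤ → ℝ and every j ∈ ℤ, if and only if γ solves the convolutional equation γ * (α↓2) = δ, i.e., Σ_{i∈ℤ} γ_{j−i} α_{2i} = δ_j for all j ∈ ℤ. -/

import Mathlib

noncomputable section

/-- Sup norm of a bi-infinite real sequence. -/
def supNorm (c : ℤ → ℝ) : ℝ := ⨆ j, |c j|

/-- Supremum of absolute first differences. -/
def deltaSup (c : ℤ → ℝ) : ℝ := ⨆ j, |c (j + 1) - c j|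

/-- ℓ¹ norm of a sequence. -/
def l1Norm (a : ℤ → ℝ) : ℝ := ∑' i, |a i|

/-- The constant K_a = 2 Σ |a_i|·|i|. -/
def Kc (a : ℤ → ℝ) : ℝ := 2 * ∑' i : ℤ, |a i| * |(i : ℝ)|

/-- Subdivision operator (S_α c)_j = Σ_i α_{j-2i} c_i. -/
def subdiv (α c : ℤ → ℝ) : ℤ → ℝ := fun j => ∑' i, α (j - 2 * i) * c i

/-- Decimation operator (D_ζ c)_j = Σ_i ζ_{j-i} c_{2i}. -/
def decim (ζ c : ℤ → ℝ) : ℤ → ℝ := fun j => ∑' i, ζ (j - i) * c (2 * i)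

/-- Reindexing lemma: the coefficient sum depends only on the difference. -/
lemma reindex_aux (α γ : ℤ → ℝ) (t k : ℤ) :
    ∑' i : ℤ, α (2 * t - 2 * i) * γ (i - k) = ∑' m : ℤ, γ (t - k - m) * α (2 * m) := by
  rw [← (Equiv.subLeft t).tsum_eq (fun m => γ (t - k - m) * α (2 * m))]
  apply tsum_congr
  intro i
  simp only [Equiv.subLeft_apply]
  have h1 : t - k - (t - i) = i - k := by ring
  have h2 : 2 * (t - i) = 2 * t - 2 * i := by ring
  rw [h1, h2, mul_comm]

/-- Even reversibility holds iff γ solves the convolutional equation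
γ * (α↓2) = δ. -/
theorem even_reversibility_iff
    (α γ : ℤ → ℝ)
    (hα_fin : (Function.support α).Finite)
    (hγ_sum : Summable (fun i => |γ i|)) :
    (∀ c : ℤ → ℝ, (∃ M : ℝ, ∀ j : ℤ, |c j| ≤ M) →
        ∀ j : ℤ, c (2 * j) - subdiv α (decim γ c) (2 * j) = 0) ↔
      (∀ j : ℤ, ∑' i : ℤ, γ (j - i) * α (2 * i) = if j = 0 then (1 : ℝ) else 0) := by
  constructor
  · -- Even reversibility ⇒ convolution equation
    intro h j
    have hb : ∃ M : ℝ, ∀ n : ℤ, |(fun n : ℤ => if n = 0 then (1:ℝ) else 0) n| ≤ M := by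
      refine ⟨1, fun n => ?_⟩
      by_cases hn : n = 0 <;> simp [hn]
    have hd : decim γ (fun n : ℤ => if n = 0 then (1:ℝ) else 0) = γ := by
      funext i
      unfold decim
      rw [tsum_eq_single 0]
      · simp
      · intro k hk
        have : (2 * k : ℤ) ≠ 0 := by omega
        simp [this]
    have := h (fun n : ℤ => if n = 0 then (1:ℝ) else 0) hb j
    rw [hd] at this
    have h2j : ((2 * j : ℤ) = 0) ↔ (j = 0) := by omega
    have hs : subdiv α γ (2 * j) = (if j = 0 then (1:ℝ) else 0) := by
      have := sub_eq_zero.mp this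
      rw [← this]
      simp only [h2j]
    rw [← hs]
    unfold subdiv
    have := reindex_aux α γ j 0
    simpa using this.symm
  · -- Convolution equation ⇒ even reversibility
    intro h c hc j
    obtain ⟨M, hM⟩ := hc
    set M' : ℝ := max M 0 with hM'def
    have hM' : ∀ n : ℤ, |c n| ≤ M' := fun n => le_trans (hM n) (le_max_left _ _)
    have hM'0 : 0 ≤ M' := le_max_right _ _
    -- summability of the decimation sums
    have hγshift : ∀ t : ℤ, Summable (fun k : ℤ => |γ (t - k)|) := by
      intro t
      have := (Equiv.subLeft t).summable_iff.mpr hγ_sum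
      exact this
    have hsum : ∀ i : ℤ, Summable (fun k : ℤ => γ (i - k) * c (2 * k)) := by
      intro i
      apply Summable.of_norm_bounded ((hγshift i).mul_right M')
      intro k
      rw [Real.norm_eq_abs, abs_mul]
      exact mul_le_mul_of_nonneg_left (hM' _) (abs_nonneg _)
    -- finite support set for the outer sum
    have hinj : Set.InjOn (fun i : ℤ => 2 * j - 2 * i) ((fun i : ℤ => 2 * j - 2 * i) ⁻¹' Function.support α) := by
      intro a _ b _ hab
      simpa using hab
    have hfin : ((fun i : ℤ => 2 * j - 2 * i) ⁻¹' Function.support α).Finite :=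
      Set.Finite.preimage hinj hα_fin
    set S : Finset ℤ := hfin.toFinset with hSdef
    have hmemS : ∀ i : ℤ, i ∉ S → α (2 * j - 2 * i) = 0 := by
      intro i hi
      by_contra hne
      exact hi (by simp [hSdef, Set.Finite.mem_toFinset, Set.mem_preimage, Function.mem_support, hne])
    have key : subdiv α (decim γ c) (2 * j) = c (2 * j) := by
      unfold subdiv
      rw [tsum_eq_sum (s := S) (fun i hi => by rw [hmemS i hi, zero_mul])]
      have step2 : ∀ i ∈ S, α (2 * j - 2 * i) * decim γ c i
          = ∑' k : ℤ, α (2 * j - 2 * i) * (γ (i - k) * c (2 * k)) := by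
        intro i _
        unfold decim
        rw [tsum_mul_left]
      rw [Finset.sum_congr rfl step2]
      rw [← Summable.tsum_finsetSum (fun i _ => (hsum i).mul_left _)]
      have step4 : ∀ k : ℤ, (∑ i ∈ S, α (2 * j - 2 * i) * (γ (i - k) * c (2 * k)))
          = (if j - k = 0 then (1:ℝ) else 0) * c (2 * k) := by
        intro k
        have : (∑ i ∈ S, α (2 * j - 2 * i) * (γ (i - k) * c (2 * k)))
            = (∑ i ∈ S, α (2 * j - 2 * i) * γ (i - k)) * c (2 * k) := by
          rw [Finset.sum_mul]
          exact Finset.sum_congr rfl fun i _ => by ring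
        rw [this]
        congr 1
        have hS' : ∑ i ∈ S, α (2 * j - 2 * i) * γ (i - k)
            = ∑' i : ℤ, α (2 * j - 2 * i) * γ (i - k) := by
          refine (tsum_eq_sum (fun i hi => ?_)).symm
          rw [hmemS i hi, zero_mul]
        rw [hS', reindex_aux α γ j k, h (j - k)]
      rw [tsum_congr step4]
      rw [tsum_eq_single j]
      · simp
      · intro k hk
        have : (j - k ≠ 0) := by omega
        simp [this]
    rw [key, sub_self]
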